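/- (Semigroup property of the Mehler kernel.) For all s > 0, t > 0 and all x, y ∈ ℝ, ∫_ℝ G(t,x,z)·G(s,z,y) dz = G(t+s,x,y). -/

import Mathlib

noncomputable section
open MeasureTheory Real

/-- The Mehler kernel `G(t,x,y)`, the integral kernel of `e^{-tH}` for the
harmonic oscillator `H = ½(-d²/dx² + x²)`. -/
def G (t x y : ℝ) : ℝ :=
  (2 * Real.pi * Real.sinh t) ^ (-(1 : ℝ) / 2) *
    Real.exp (-(((x ^ 2 + y ^ 2) * Real.cosh t - 2 * x * y) / (2 * Real.sinh t)))

/-- The leading error kernel `R(t,x,y)`. -/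
def R (t x y : ℝ) : ℝ :=
  G t x y * (t ^ 2 / 12) *
    (t * ((1 / 4) * (Real.exp t + Real.exp (-t)) / (Real.exp t - Real.exp (-t)) +
          ((Real.exp t + Real.exp (-t)) * x * y - (x ^ 2 + y ^ 2)) /
            (Real.exp t - Real.exp (-t)) ^ 2) +
      (1 / 16) * (1 + (4 * x * y - (Real.exp t + Real.exp (-t)) * (x ^ 2 + y ^ 2)) /
            (Real.exp t - Real.exp (-t))))

/-- Real Gaussian integral with linear term. -/
lemma integral_rexp_quadratic' {b : ℝ} (hb : b < 0) (c d : ℝ) :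
    ∫ x : ℝ, Real.exp (b * x ^ 2 + c * x + d)
      = Real.sqrt (π / -b) * Real.exp (d - c ^ 2 / (4 * b)) := by
  have hb' : (0:ℝ) < -b := by linarith
  have key := integral_cexp_quadratic (b := (b : ℂ)) (by simpa using hb) (c : ℂ) (d : ℂ)
  have h1 : ∀ x : ℝ, Complex.exp ((b:ℂ) * x ^ 2 + c * x + d)
      = ((Real.exp (b * x ^ 2 + c * x + d) : ℝ) : ℂ) := by
    intro x
    rw [Complex.ofReal_exp]
    push_cast
    ring_nf
  simp_rw [h1] at key
  have h2 : ((π : ℂ) / -(b:ℂ)) ^ (1/2 : ℂ) = ((Real.sqrt (π / -b) : ℝ) : ℂ) := by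
    rw [Real.sqrt_eq_rpow, Complex.ofReal_cpow (by positivity)]
    push_cast
    ring_nf
  have h3 : ((d : ℂ) - (c:ℂ)^2/(4*(b:ℂ))) = ((d - c^2/(4*b) : ℝ) : ℂ) := by push_cast; ring
  rw [h2, h3, ← Complex.ofReal_exp, ← Complex.ofReal_mul] at key
  rw [show ((fun x : ℝ => ((Real.exp (b * x ^ 2 + c * x + d) : ℝ) : ℂ)))
      = (fun x : ℝ => (RCLike.ofReal (K := ℂ) (Real.exp (b * x ^ 2 + c * x + d)))) from rfl,
    integral_ofReal] at key
  exact Complex.ofReal_injective key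

/-- Algebraic identity for the exponent. -/
lemma mehler_exp_alg (St Ss Ct Cs x y : ℝ) (hSt : 0 < St) (hSs : 0 < Ss)
    (hCt : 0 < Ct) (hCs : 0 < Cs)
    (hct : Ct ^ 2 = St ^ 2 + 1) (hcs : Cs ^ 2 = Ss ^ 2 + 1) :
    -(x ^ 2 * Ct / (2 * St) + y ^ 2 * Cs / (2 * Ss)) -
        (x / St + y / Ss) ^ 2 / (4 * (-((Ct / (2 * St) + Cs / (2 * Ss))))) =
      -(((x ^ 2 + y ^ 2) * (Ct * Cs + St * Ss) - 2 * x * y) / (2 * (St * Cs + Ct * Ss))) := by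
  have h1 : 0 < St * Cs + Ct * Ss := by positivity
  have h2 : 0 < Ct / (2 * St) + Cs / (2 * Ss) := by positivity
  rw [mul_neg, div_neg, sub_neg_eq_add]
  field_simp
  linear_combination (-4*(Ct*Ss+St*Cs)*x^2*Ss^2) * hct +
    (-4*(Ct*Ss+St*Cs)*y^2*St^2) * hcs

/-- Algebraic identity for the prefactor. -/
lemma mehler_pre_alg (St Ss E : ℝ) (hSt : 0 < St) (hSs : 0 < Ss) (hE : 0 < E) :
    (2 * π * St) ^ (-(1:ℝ)/2) * (2 * π * Ss) ^ (-(1:ℝ)/2) *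
        Real.sqrt (π / (E / (2 * St * Ss)))
      = (2 * π * E) ^ (-(1:ℝ)/2) := by
  have hrpow : ∀ a : ℝ, 0 < a → a ^ (-(1:ℝ)/2) = (Real.sqrt a)⁻¹ := by
    intro a ha
    rw [neg_div, Real.rpow_neg ha.le, Real.sqrt_eq_rpow]
  rw [hrpow _ (by positivity), hrpow _ (by positivity), hrpow _ (by positivity)]
  have h5 : Real.sqrt (π / (E / (2 * St * Ss))) =
      Real.sqrt (2*π*St) * Real.sqrt (2*π*Ss) / Real.sqrt (2*π*E) := by
    rw [← Real.sqrt_mul (by positivity), ← Real.sqrt_div (by positivity)]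
    congr 1
    field_simp
  rw [h5]
  have p1 : Real.sqrt (2*π*St) > 0 := Real.sqrt_pos.mpr (by positivity)
  have p2 : Real.sqrt (2*π*Ss) > 0 := Real.sqrt_pos.mpr (by positivity)
  have p3 : Real.sqrt (2*π*E) > 0 := Real.sqrt_pos.mpr (by positivity)
  field_simp

/-- Semigroup (Chapman–Kolmogorov) property of the Mehler kernel. -/
theorem mehler_kernel_semigroup (s t : ℝ) (hs : 0 < s) (ht : 0 < t) (x y : ℝ) :
    ∫ z : ℝ, G t x z * G s z y = G (t + s) x y := by
  have hSt : 0 < Real.sinh t := Real.sinh_pos_iff.mpr ht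
  have hSs : 0 < Real.sinh s := Real.sinh_pos_iff.mpr hs
  have hCt : 0 < Real.cosh t := Real.cosh_pos t
  have hCs : 0 < Real.cosh s := Real.cosh_pos s
  have hD : 0 < Real.sinh (t + s) := Real.sinh_pos_iff.mpr (by linarith)
  have hct : Real.cosh t ^ 2 = Real.sinh t ^ 2 + 1 := by
    nlinarith [Real.cosh_sq_sub_sinh_sq t]
  have hcs : Real.cosh s ^ 2 = Real.sinh s ^ 2 + 1 := by
    nlinarith [Real.cosh_sq_sub_sinh_sq s]
  have hb : -(Real.sinh (t + s) / (2 * Real.sinh t * Real.sinh s)) < 0 := by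
    simp only [neg_lt, neg_zero]; positivity
  have hstep : ∀ z : ℝ, G t x z * G s z y =
      ((2 * π * Real.sinh t) ^ (-(1:ℝ)/2) * (2 * π * Real.sinh s) ^ (-(1:ℝ)/2)) *
        Real.exp ((-(Real.sinh (t + s) / (2 * Real.sinh t * Real.sinh s))) * z ^ 2 +
          (x / Real.sinh t + y / Real.sinh s) * z +
          (-(x ^ 2 * Real.cosh t / (2 * Real.sinh t) +
             y ^ 2 * Real.cosh s / (2 * Real.sinh s)))) := by
    intro z
    unfold G
    rw [mul_mul_mul_comm, ← Real.exp_add]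
    congr 1
    rw [Real.sinh_add]
    field_simp
    ring
  simp_rw [hstep]
  rw [MeasureTheory.integral_const_mul, integral_rexp_quadratic' hb]
  have hexp : (-(x ^ 2 * Real.cosh t / (2 * Real.sinh t) +
        y ^ 2 * Real.cosh s / (2 * Real.sinh s))) -
      (x / Real.sinh t + y / Real.sinh s) ^ 2 /
        (4 * (-(Real.sinh (t + s) / (2 * Real.sinh t * Real.sinh s)))) =
      -(((x ^ 2 + y ^ 2) * Real.cosh (t + s) - 2 * x * y) / (2 * Real.sinh (t + s))) := by
    rw [Real.cosh_add, Real.sinh_add,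
      show -((Real.sinh t * Real.cosh s + Real.cosh t * Real.sinh s) /
          (2 * Real.sinh t * Real.sinh s)) =
        -((Real.cosh t / (2 * Real.sinh t) + Real.cosh s / (2 * Real.sinh s))) from by
        field_simp; ring]
    exact mehler_exp_alg _ _ _ _ x y hSt hSs hCt hCs hct hcs
  have hpre : (2 * π * Real.sinh t) ^ (-(1:ℝ)/2) * (2 * π * Real.sinh s) ^ (-(1:ℝ)/2) *
      Real.sqrt (π / -(-(Real.sinh (t + s) / (2 * Real.sinh t * Real.sinh s))))
      = (2 * π * Real.sinh (t + s)) ^ (-(1:ℝ)/2) := by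
    rw [neg_neg]
    exact mehler_pre_alg _ _ _ hSt hSs hD
  rw [← mul_assoc, hpre, hexp]
  rfl
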